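/- (Geodesic convexity of the local condition number under the shuffling action.) Let V be a complex inner product space, let f = (f₁,…,f_m) be an m-tuple of vectors of V not all zero, let J be a nonzero n×m complex matrix, and let ‖·‖₂ be a unitarily invariant norm on complex n×m matrices. For an m×m complex matrix X define the shuffled tuple X·f by (X·f)ᵢ = Σⱼ Xᵢⱼ fⱼ, and set ‖f‖ := √(Σᵢ ‖fᵢ‖²). Then for every Hermitian m×m matrix H, the function t ↦ log ‖e^{tH}·f‖ + log ‖J e^{-tH}‖₂ is convex on ℝ. -/

import Mathlib

open Matrix

/-- The matrix exponential of a square complex matrix. -/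
noncomputable def mexp {k : ℕ} (A : Matrix (Fin k) (Fin k) ℂ) : Matrix (Fin k) (Fin k) ℂ :=
  NormedSpace.exp A

/-- The shuffling action of an `m × m` complex matrix on an `m`-tuple of vectors:
`(X·f)ᵢ = Σⱼ Xᵢⱼ fⱼ`. -/
noncomputable def shuffle {V : Type*} [AddCommGroup V] [Module ℂ V] {m : ℕ}
    (X : Matrix (Fin m) (Fin m) ℂ) (f : Fin m → V) : Fin m → V :=
  fun i => ∑ j, X i j • f j

/-- `N` is a unitarily invariant matrix norm on `m × n` complex matrices:
it is a norm and satisfies `N (U * A * V) = N A` for all unitary `U`, `V`. -/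
structure IsUnitarilyInvariantNorm (m n : ℕ) (N : Matrix (Fin m) (Fin n) ℂ → ℝ) : Prop where
  eq_zero_iff : ∀ A, N A = 0 ↔ A = 0
  smul : ∀ (c : ℂ) (A), N (c • A) = ‖c‖ * N A
  triangle : ∀ A B, N (A + B) ≤ N A + N B
  unitary_inv : ∀ (U : Matrix (Fin m) (Fin m) ℂ) (V : Matrix (Fin n) (Fin n) ℂ),
    U ∈ Matrix.unitaryGroup (Fin m) ℂ → V ∈ Matrix.unitaryGroup (Fin n) ℂ →
    ∀ A, N (U * A * V) = N A



section Aux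
variable {k : ℕ}

lemma sum_exp_pos (c mu : Fin k → ℝ) (hc : ∀ j, 0 ≤ c j) (hex : ∃ j, 0 < c j) (t : ℝ) :
    0 < ∑ j, c j * Real.exp (t * mu j) := by
  obtain ⟨j0, hj0⟩ := hex
  refine Finset.sum_pos' (fun j _ => mul_nonneg (hc j) (Real.exp_pos _).le) ?_
  exact ⟨j0, Finset.mem_univ _, mul_pos hj0 (Real.exp_pos _)⟩

lemma holder_sum (c mu : Fin k → ℝ) (hc : ∀ j, 0 ≤ c j)
    (t s a b : ℝ) (ha : 0 ≤ a) (hb : 0 ≤ b) (hab : a + b = 1) :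
    ∑ j, c j * Real.exp ((a * t + b * s) * mu j)
      ≤ (∑ j, c j * Real.exp (t * mu j)) ^ a * (∑ j, c j * Real.exp (s * mu j)) ^ b := by
  rcases eq_or_lt_of_le ha with rfl | ha'
  · simp only [zero_add] at hab; subst hab
    simp [Real.rpow_zero, Real.rpow_one]
  rcases eq_or_lt_of_le hb with rfl | hb'
  · rw [add_zero] at hab; subst hab
    simp [Real.rpow_zero, Real.rpow_one]
  by_cases hall : ∀ j, c j = 0
  · simp only [hall, zero_mul, Finset.sum_const_zero]
    positivity
  push_neg at hall
  obtain ⟨j0, hj0⟩ := hall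
  have hex : ∃ j, 0 < c j := ⟨j0, lt_of_le_of_ne (hc j0) (Ne.symm hj0)⟩
  set X := ∑ j, c j * Real.exp (t * mu j) with hX
  set Y := ∑ j, c j * Real.exp (s * mu j) with hY
  have hXpos : 0 < X := sum_exp_pos c mu hc hex t
  have hYpos : 0 < Y := sum_exp_pos c mu hc hex s
  have key : ∀ j, c j * Real.exp ((a * t + b * s) * mu j)
      ≤ X ^ a * Y ^ b * (a * (c j * Real.exp (t * mu j) / X) + b * (c j * Real.exp (s * mu j) / Y)) := by
    intro j
    have h1 : c j * Real.exp ((a * t + b * s) * mu j)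
        = (c j * Real.exp (t * mu j)) ^ a * (c j * Real.exp (s * mu j)) ^ b := by
      rcases eq_or_lt_of_le (hc j) with hcj | hcj
      · rw [← hcj]; simp [Real.zero_rpow (ne_of_gt ha'), Real.zero_rpow (ne_of_gt hb')]
      · rw [Real.mul_rpow (le_of_lt hcj) (Real.exp_pos _).le,
          Real.mul_rpow (le_of_lt hcj) (Real.exp_pos _).le, ← Real.exp_mul, ← Real.exp_mul]
        rw [mul_mul_mul_comm, ← Real.rpow_add hcj, ← Real.exp_add, hab, Real.rpow_one]
        ring_nf
    rw [h1]
    have h2 : (c j * Real.exp (t * mu j)) ^ a * (c j * Real.exp (s * mu j)) ^ b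
        = X ^ a * Y ^ b * ((c j * Real.exp (t * mu j) / X) ^ a * (c j * Real.exp (s * mu j) / Y) ^ b) := by
      rw [Real.div_rpow (mul_nonneg (hc j) (Real.exp_pos _).le) hXpos.le,
        Real.div_rpow (mul_nonneg (hc j) (Real.exp_pos _).le) hYpos.le]
      field_simp
    rw [h2]
    have h3 : (c j * Real.exp (t * mu j) / X) ^ a * (c j * Real.exp (s * mu j) / Y) ^ b
        ≤ a * (c j * Real.exp (t * mu j) / X) + b * (c j * Real.exp (s * mu j) / Y) :=
      Real.geom_mean_le_arith_mean2_weighted ha hb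
        (div_nonneg (mul_nonneg (hc j) (Real.exp_pos _).le) hXpos.le)
        (div_nonneg (mul_nonneg (hc j) (Real.exp_pos _).le) hYpos.le) hab
    exact mul_le_mul_of_nonneg_left h3
      (mul_nonneg (Real.rpow_nonneg hXpos.le _) (Real.rpow_nonneg hYpos.le _))
  calc ∑ j, c j * Real.exp ((a * t + b * s) * mu j)
      ≤ ∑ j, X ^ a * Y ^ b * (a * (c j * Real.exp (t * mu j) / X) + b * (c j * Real.exp (s * mu j) / Y)) :=
        Finset.sum_le_sum fun j _ => key j
    _ = X ^ a * Y ^ b := by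
        rw [← Finset.mul_sum]
        have : ∑ j, (a * (c j * Real.exp (t * mu j) / X) + b * (c j * Real.exp (s * mu j) / Y))
            = a * (X / X) + b * (Y / Y) := by
          rw [Finset.sum_add_distrib, ← Finset.mul_sum, ← Finset.mul_sum, ← Finset.sum_div,
            ← Finset.sum_div]
        rw [this, div_self (ne_of_gt hXpos), div_self (ne_of_gt hYpos)]
        simp [hab]

lemma convexOn_log_sum_exp (c mu : Fin k → ℝ) (hc : ∀ j, 0 ≤ c j) (hex : ∃ j, 0 < c j) :
    ConvexOn ℝ Set.univ (fun t => Real.log (∑ j, c j * Real.exp (t * mu j))) := by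
  refine ⟨convex_univ, fun x _ y _ a b ha hb hab => ?_⟩
  simp only [smul_eq_mul]
  have h1 := holder_sum c mu hc x y a b ha hb hab
  have hpx := sum_exp_pos c mu hc hex x
  have hpy := sum_exp_pos c mu hc hex y
  have hpm := sum_exp_pos c mu hc hex (a * x + b * y)
  calc Real.log (∑ j, c j * Real.exp ((a * x + b * y) * mu j))
      ≤ Real.log ((∑ j, c j * Real.exp (x * mu j)) ^ a * (∑ j, c j * Real.exp (y * mu j)) ^ b) :=
        Real.log_le_log hpm h1
    _ = a * Real.log (∑ j, c j * Real.exp (x * mu j)) + b * Real.log (∑ j, c j * Real.exp (y * mu j)) := by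
        rw [Real.log_mul (ne_of_gt (Real.rpow_pos_of_pos hpx a)) (ne_of_gt (Real.rpow_pos_of_pos hpy b)),
          Real.log_rpow hpx, Real.log_rpow hpy]

end Aux


section NormAux
variable {n m : ℕ} {N : Matrix (Fin n) (Fin m) ℂ → ℝ}

lemma real_smul_eq (c : ℝ) (A : Matrix (Fin n) (Fin m) ℂ) : c • A = (c : ℂ) • A := by
  ext i j
  simp [Matrix.smul_apply, Complex.real_smul]

lemma N_real_smul (hN : IsUnitarilyInvariantNorm n m N) (c : ℝ) (A : Matrix (Fin n) (Fin m) ℂ) :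
    N (c • A) = |c| * N A := by
  rw [real_smul_eq, hN.smul]
  simp

lemma N_nonneg (hN : IsUnitarilyInvariantNorm n m N) (A : Matrix (Fin n) (Fin m) ℂ) : 0 ≤ N A := by
  have h0 : N 0 = 0 := (hN.eq_zero_iff 0).mpr rfl
  have h1 : N (A + (-1 : ℂ) • A) ≤ N A + N ((-1 : ℂ) • A) := hN.triangle _ _
  rw [hN.smul] at h1
  simp only [neg_smul, one_smul, add_neg_cancel, h0] at h1
  simp only [norm_neg, norm_one, one_mul] at h1
  linarith

lemma N_pos (hN : IsUnitarilyInvariantNorm n m N) {A : Matrix (Fin n) (Fin m) ℂ} (hA : A ≠ 0) :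
    0 < N A :=
  lt_of_le_of_ne (N_nonneg hN A) (fun h => hA ((hN.eq_zero_iff A).mp h.symm))

/-- Hahn–Banach: a norming functional for `N` at `x₀`. -/
lemma exists_dual_functional (hN : IsUnitarilyInvariantNorm n m N)
    (x₀ : Matrix (Fin n) (Fin m) ℂ) :
    ∃ g : Matrix (Fin n) (Fin m) ℂ →ₗ[ℝ] ℝ, g x₀ = N x₀ ∧ ∀ x, g x ≤ N x := by
  by_cases hx₀ : x₀ = 0
  · refine ⟨0, ?_, fun x => N_nonneg hN x⟩
    simp [hx₀, (hN.eq_zero_iff 0).mpr rfl]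
  -- a functional φ with φ x₀ ≠ 0
  obtain ⟨φ, hφ⟩ : ∃ φ : Module.Dual ℝ (Matrix (Fin n) (Fin m) ℂ), φ x₀ ≠ 0 := by
    by_contra h
    push_neg at h
    exact hx₀ ((Module.forall_dual_apply_eq_zero_iff ℝ x₀).mp h)
  set f : Matrix (Fin n) (Fin m) ℂ →ₗ[ℝ] ℝ := (N x₀ / φ x₀) • φ with hf
  have hfx₀ : f x₀ = N x₀ := by
    simp [hf, div_mul_cancel₀, hφ]
  obtain ⟨g, hg1, hg2⟩ := exists_extension_of_le_sublinear (f.toPMap (ℝ ∙ x₀)) N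
    (fun c hc x => by rw [N_real_smul hN, abs_of_pos hc])
    (fun x y => hN.triangle x y)
    (by
      rintro ⟨x, hx⟩
      obtain ⟨c, rfl⟩ := Submodule.mem_span_singleton.mp hx
      change f (c • x₀) ≤ N (c • x₀)
      rw [_root_.map_smul, smul_eq_mul, hfx₀]
      show c * N x₀ ≤ N (c • x₀)
      rcases le_or_gt 0 c with hc | hc
      · exact le_of_eq (by rw [N_real_smul hN, abs_of_nonneg hc])
      · exact le_trans (mul_nonpos_of_nonpos_of_nonneg hc.le (N_nonneg hN _))
          (N_nonneg hN _))
  refine ⟨g, ?_, hg2⟩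
  have := hg1 ⟨x₀, Submodule.mem_span_singleton_self x₀⟩
  change g x₀ = f x₀ at this
  rwa [hfx₀] at this

end NormAux


section ShuffleAux
variable {V : Type*} [NormedAddCommGroup V] [InnerProductSpace ℂ V] {m : ℕ}

lemma shuffle_mul (X Y : Matrix (Fin m) (Fin m) ℂ) (f : Fin m → V) :
    shuffle (X * Y) f = shuffle X (shuffle Y f) := by
  funext i
  simp only [shuffle, Matrix.mul_apply, Finset.smul_sum, smul_smul]
  rw [Finset.sum_comm]
  congr 1
  ext j
  rw [Finset.sum_smul]

lemma shuffle_diagonal (d : Fin m → ℂ) (f : Fin m → V) (i : Fin m) :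
    shuffle (diagonal d) f i = d i • f i := by
  simp only [shuffle, diagonal_apply]
  rw [Finset.sum_eq_single i]
  · simp
  · intro j _ hj; simp [Ne.symm hj]
  · simp

lemma sum_norm_sq_shuffle_unitary {W : Matrix (Fin m) (Fin m) ℂ}
    (hW : W ∈ Matrix.unitaryGroup (Fin m) ℂ) (f : Fin m → V) :
    ∑ i, ‖shuffle W f i‖ ^ 2 = ∑ i, ‖f i‖ ^ 2 := by
  have hW1 : star W * W = 1 := (Matrix.mem_unitaryGroup_iff'.mp hW)
  have key : ∑ i, (inner ℂ (shuffle W f i) (shuffle W f i) : ℂ)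
      = ∑ j, (inner ℂ (f j) (f j) : ℂ) := by
    have expand : ∀ i, (inner ℂ (shuffle W f i) (shuffle W f i) : ℂ)
        = ∑ j, W i j * ∑ l, (starRingEnd ℂ) (W i l) * (inner ℂ (f l) (f j) : ℂ) := by
      intro i
      simp only [shuffle, inner_sum, sum_inner, inner_smul_left, inner_smul_right]
    simp only [expand]
    rw [Finset.sum_comm]
    refine Finset.sum_congr rfl fun j _ => ?_
    have step : ∑ i, W i j * ∑ l, (starRingEnd ℂ) (W i l) * (inner ℂ (f l) (f j) : ℂ)
        = ∑ l, (star W * W) l j * (inner ℂ (f l) (f j) : ℂ) := by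
      simp only [Finset.mul_sum]
      rw [Finset.sum_comm]
      refine Finset.sum_congr rfl fun l _ => ?_
      rw [Matrix.mul_apply, Finset.sum_mul]
      refine Finset.sum_congr rfl fun i _ => ?_
      simp only [Matrix.star_apply, RCLike.star_def]
      ring
    rw [step, hW1]
    rw [Finset.sum_eq_single j]
    · simp
    · intro l _ hl; simp [Matrix.one_apply, hl]
    · simp
  have hnorm : ∀ x : V, (inner ℂ x x : ℂ).re = ‖x‖ ^ 2 := fun x => by
    have := inner_self_eq_norm_sq (𝕜 := ℂ) x
    simpa [RCLike.re_to_complex] using this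
  have re_eq := congrArg Complex.re key
  simpa [Complex.re_sum, hnorm, ← Complex.ofReal_pow, Complex.ofReal_re] using re_eq

end ShuffleAux


section MexpAux
variable {m n : ℕ}

lemma mexp_hermitian (H : Matrix (Fin m) (Fin m) ℂ) (hH : H.IsHermitian) (z : ℂ) :
    mexp (z • H) = (hH.eigenvectorUnitary : Matrix (Fin m) (Fin m) ℂ) *
      diagonal (fun i => Complex.exp (z * hH.eigenvalues i)) *
      star (hH.eigenvectorUnitary : Matrix (Fin m) (Fin m) ℂ) := by
  set U := (hH.eigenvectorUnitary : Matrix (Fin m) (Fin m) ℂ) with hU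
  have hmem : U ∈ Matrix.unitaryGroup (Fin m) ℂ := SetLike.coe_mem _
  have h1 : star U * U = 1 := Matrix.mem_unitaryGroup_iff'.mp hmem
  have h2 : U * star U = 1 := Matrix.mem_unitaryGroup_iff.mp hmem
  have hUinv : U⁻¹ = star U := Matrix.inv_eq_left_inv h1
  have hunit : IsUnit U := ⟨⟨U, star U, h2, h1⟩, rfl⟩
  have hzH : z • H = U * (z • diagonal (RCLike.ofReal ∘ hH.eigenvalues)) * U⁻¹ := by
    rw [hUinv]
    conv_lhs => rw [hH.spectral_theorem, Unitary.conjStarAlgAut_apply]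
    rw [Matrix.mul_smul, Matrix.smul_mul]
  rw [mexp, hzH, Matrix.exp_conj _ _ hunit, hUinv]
  rw [← Matrix.diagonal_smul, Matrix.exp_diagonal, Pi.exp_def]
  congr 1
  funext i
  rw [← Complex.exp_eq_exp_ℂ]
  simp [Pi.smul_apply, Function.comp, smul_eq_mul]

lemma mul_diagonal_real_decomp (B : Matrix (Fin n) (Fin m) ℂ) (r : Fin m → ℝ) :
    B * diagonal (fun j => (r j : ℂ))
      = ∑ j, r j • (B * diagonal (fun k => if k = j then (1 : ℂ) else 0)) := by
  ext i k
  rw [Matrix.sum_apply]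
  simp only [Matrix.smul_apply, Matrix.mul_diagonal]
  rw [Finset.sum_eq_single k]
  · simp [Complex.real_smul, mul_comm]
  · intro j _ hj
    simp [Ne.symm hj]
  · simp

lemma sign_diag_unitary (c : Fin m → ℝ) :
    diagonal (fun j => ((if 0 ≤ c j then (1 : ℝ) else -1 : ℝ) : ℂ))
      ∈ Matrix.unitaryGroup (Fin m) ℂ := by
  rw [Matrix.mem_unitaryGroup_iff, Matrix.star_eq_conjTranspose,
    Matrix.diagonal_conjTranspose, Matrix.diagonal_mul_diagonal]
  ext i j
  by_cases h : i = j
  · subst h; by_cases h2 : 0 ≤ c i <;> simp [h2, Matrix.one_apply]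
  · simp [Matrix.diagonal_apply_ne _ h, Matrix.one_apply, h]

lemma one_mem_unitary : (1 : Matrix (Fin n) (Fin n) ℂ) ∈ Matrix.unitaryGroup (Fin n) ℂ := by
  rw [Matrix.mem_unitaryGroup_iff]; simp

end MexpAux

section L2
variable {n m : ℕ} {N : Matrix (Fin n) (Fin m) ℂ → ℝ}

lemma convexOn_log_N_diag (hN : IsUnitarilyInvariantNorm n m N)
    (B : Matrix (Fin n) (Fin m) ℂ) (hB : B ≠ 0) (mu : Fin m → ℝ) :
    ConvexOn ℝ Set.univ
      (fun t => Real.log (N (B * diagonal (fun j => (Real.exp (t * mu j) : ℂ))))) := by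
  have hBD : ∀ t : ℝ, B * diagonal (fun j => (Real.exp (t * mu j) : ℂ)) ≠ 0 := by
    intro t h0
    obtain ⟨i, j, hij⟩ : ∃ i j, B i j ≠ 0 := by
      by_contra hall; push_neg at hall
      exact hB (by ext i j; simpa using hall i j)
    have hent := congrFun (congrFun h0 i) j
    rw [Matrix.mul_diagonal] at hent
    simp only [Matrix.zero_apply, mul_eq_zero] at hent
    rcases hent with h | h
    · exact hij h
    · exact Complex.ofReal_ne_zero.mpr (Real.exp_ne_zero _) h
  set ψ : ℝ → ℝ := fun t => N (B * diagonal (fun j => (Real.exp (t * mu j) : ℂ))) with hψ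
  have hψpos : ∀ t, 0 < ψ t := fun t => N_pos hN (hBD t)
  refine ⟨convex_univ, fun x _ y _ a b ha hb hab => ?_⟩
  simp only [smul_eq_mul]
  set t₀ := a * x + b * y with ht₀
  obtain ⟨g, hg1, hg2⟩ :=
    exists_dual_functional hN (B * diagonal (fun j => (Real.exp (t₀ * mu j) : ℂ)))
  set c : Fin m → ℝ := fun j => g (B * diagonal (fun k => if k = j then (1 : ℂ) else 0)) with hcdef
  have gdecomp : ∀ r : Fin m → ℝ,
      g (B * diagonal (fun j => (r j : ℂ))) = ∑ j, r j * c j := by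
    intro r
    rw [mul_diagonal_real_decomp, map_sum]
    exact Finset.sum_congr rfl fun j _ => by rw [LinearMap.map_smul, smul_eq_mul]
  have hεc : ∀ j, (if 0 ≤ c j then (1:ℝ) else -1) * c j = |c j| := by
    intro j; by_cases h : 0 ≤ c j
    · simp [h, abs_of_nonneg h]
    · simp [h, abs_of_neg (lt_of_not_ge h)]
  set h : ℝ → ℝ := fun t => ∑ j, |c j| * Real.exp (t * mu j) with hhdef
  have hhnonneg : ∀ t, 0 ≤ h t :=
    fun t => Finset.sum_nonneg fun j _ => mul_nonneg (abs_nonneg _) (Real.exp_pos _).le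
  have hhle : ∀ t, h t ≤ ψ t := by
    intro t
    have e2 : B * diagonal (fun j => ((Real.exp (t * mu j) * (if 0 ≤ c j then (1:ℝ) else -1) : ℝ) : ℂ))
        = (B * diagonal (fun j => (Real.exp (t * mu j) : ℂ)))
          * diagonal (fun j => (((if 0 ≤ c j then (1:ℝ) else -1) : ℝ) : ℂ)) := by
      rw [Matrix.mul_assoc, Matrix.diagonal_mul_diagonal]
      congr 1
      funext j
      push_cast
      ring
    have e3 : h t = g (B * diagonal
        (fun j => ((Real.exp (t * mu j) * (if 0 ≤ c j then (1:ℝ) else -1) : ℝ) : ℂ))) := by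
      rw [gdecomp]
      refine Finset.sum_congr rfl fun j _ => ?_
      rw [mul_assoc, hεc j, mul_comm]
    rw [e3, e2]
    refine le_trans (hg2 _) ?_
    have := hN.unitary_inv 1 (diagonal (fun j => (((if 0 ≤ c j then (1:ℝ) else -1) : ℝ) : ℂ)))
      one_mem_unitary (sign_diag_unitary c)
      (B * diagonal (fun j => (Real.exp (t * mu j) : ℂ)))
    rw [Matrix.one_mul] at this
    rw [this]
  have hψt₀ : ψ t₀ ≤ h t₀ := by
    have e4 : ψ t₀ = ∑ j, Real.exp (t₀ * mu j) * c j := by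
      have h5 : ψ t₀ = N (B * diagonal fun j => (Real.exp (t₀ * mu j) : ℂ)) := rfl
      rw [h5, ← hg1, gdecomp]
    rw [e4, hhdef]
    refine Finset.sum_le_sum fun j _ => ?_
    rw [mul_comm (|c j|)]
    exact mul_le_mul_of_nonneg_left (le_abs_self _) (Real.exp_pos _).le
  have hhle2 : h t₀ ≤ (h x) ^ a * (h y) ^ b :=
    holder_sum (fun j => |c j|) mu (fun j => abs_nonneg _) x y a b ha hb hab
  have final : ψ t₀ ≤ (ψ x) ^ a * (ψ y) ^ b := by
    refine le_trans (le_trans hψt₀ hhle2) ?_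
    exact mul_le_mul (Real.rpow_le_rpow (hhnonneg x) (hhle x) ha)
      (Real.rpow_le_rpow (hhnonneg y) (hhle y) hb)
      (Real.rpow_nonneg (hhnonneg y) _) (Real.rpow_nonneg (hψpos x).le _)
  calc Real.log (ψ t₀) ≤ Real.log ((ψ x) ^ a * (ψ y) ^ b) := Real.log_le_log (hψpos t₀) final
    _ = a * Real.log (ψ x) + b * Real.log (ψ y) := by
        rw [Real.log_mul (ne_of_gt (Real.rpow_pos_of_pos (hψpos x) a))
          (ne_of_gt (Real.rpow_pos_of_pos (hψpos y) b)),
          Real.log_rpow (hψpos x), Real.log_rpow (hψpos y)]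

end L2


/-- **Geodesic convexity of the local condition number under the shuffling action.**
For a not-all-zero tuple `f` of vectors of a complex inner product space, a nonzero
matrix `J ∈ ℂ^{n×m}`, a unitarily invariant norm `‖·‖₂` on `ℂ^{n×m}` and a Hermitian `H`,
the function `t ↦ log ‖e^{tH}·f‖ + log ‖J e^{-tH}‖₂` is convex on `ℝ`,
where `‖f‖ = √(Σᵢ ‖fᵢ‖²)`. -/
theorem shuffling_local_condition_convex
    (V : Type*) [NormedAddCommGroup V] [InnerProductSpace ℂ V]
    (m n : ℕ) (f : Fin m → V) (hf : f ≠ 0)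
    (J : Matrix (Fin n) (Fin m) ℂ) (hJ : J ≠ 0)
    (N₂ : Matrix (Fin n) (Fin m) ℂ → ℝ) (hN₂ : IsUnitarilyInvariantNorm n m N₂)
    (H : Matrix (Fin m) (Fin m) ℂ) (hH : H.IsHermitian) :
    ConvexOn ℝ Set.univ (fun t : ℝ =>
      Real.log (Real.sqrt (∑ i, ‖shuffle (mexp ((t : ℂ) • H)) f i‖ ^ 2)) +
      Real.log (N₂ (J * mexp ((-t : ℂ) • H)))) := by
  classical
  set U := (hH.eigenvectorUnitary : Matrix (Fin m) (Fin m) ℂ) with hUdef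
  set lam := hH.eigenvalues with hlamdef
  have hUmem : U ∈ Matrix.unitaryGroup (Fin m) ℂ := SetLike.coe_mem _
  have hUstar : star U ∈ Matrix.unitaryGroup (Fin m) ℂ := Unitary.star_mem hUmem
  set gvec := shuffle (star U) f with hgvec
  set c : Fin m → ℝ := fun i => ‖gvec i‖ ^ 2 with hcdef
  have hcnn : ∀ i, 0 ≤ c i := fun i => sq_nonneg _
  have hsum_c : ∑ i, c i = ∑ i, ‖f i‖ ^ 2 := sum_norm_sq_shuffle_unitary hUstar f
  have hfex : ∃ i, f i ≠ 0 := by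
    by_contra hfe; push_neg at hfe
    exact hf (funext fun i => hfe i)
  have hcpos : ∃ i, 0 < c i := by
    by_contra hno; push_neg at hno
    have hz : ∀ i, c i = 0 := fun i => le_antisymm (hno i) (hcnn i)
    obtain ⟨i0, hi0⟩ := hfex
    have hs : (0:ℝ) < ∑ i, ‖f i‖ ^ 2 :=
      Finset.sum_pos' (fun i _ => sq_nonneg _) ⟨i0, Finset.mem_univ _, pow_pos (norm_pos_iff.mpr hi0) 2⟩
    rw [← hsum_c] at hs
    simp [hz] at hs
  have term1eq : ∀ t : ℝ,
      ∑ i, ‖shuffle (mexp ((t : ℂ) • H)) f i‖ ^ 2 = ∑ i, c i * Real.exp (t * (2 * lam i)) := by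
    intro t
    rw [mexp_hermitian H hH, shuffle_mul, shuffle_mul, sum_norm_sq_shuffle_unitary hUmem]
    refine Finset.sum_congr rfl fun i _ => ?_
    rw [shuffle_diagonal, norm_smul]
    have hz : Complex.exp ((t:ℂ) * (lam i : ℂ)) = ((Real.exp (t * lam i) : ℝ) : ℂ) := by
      rw [← Complex.ofReal_mul, Complex.ofReal_exp]
    rw [hz, Complex.norm_real, Real.norm_eq_abs, abs_of_pos (Real.exp_pos _), mul_pow]
    have h2 : Real.exp (t * (2 * lam i)) = Real.exp (t * lam i) ^ 2 := by
      rw [show t * (2 * lam i) = t * lam i + t * lam i by ring, Real.exp_add, sq]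
    rw [h2]
    ring
  have conv1 : ConvexOn ℝ Set.univ
      (fun t : ℝ => Real.log (Real.sqrt (∑ i, ‖shuffle (mexp ((t : ℂ) • H)) f i‖ ^ 2))) := by
    have hcv : ConvexOn ℝ Set.univ (fun t => Real.log (∑ i, c i * Real.exp (t * (2 * lam i)))) :=
      convexOn_log_sum_exp c (fun i => 2 * lam i) hcnn hcpos
    have heq : (fun t : ℝ => Real.log (Real.sqrt (∑ i, ‖shuffle (mexp ((t : ℂ) • H)) f i‖ ^ 2)))
        = fun t => (1/2 : ℝ) * Real.log (∑ i, c i * Real.exp (t * (2 * lam i))) := by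
      funext t
      rw [term1eq t, Real.log_sqrt (Finset.sum_nonneg fun i _ =>
        mul_nonneg (hcnn i) (Real.exp_pos _).le)]
      ring
    rw [heq]
    have := hcv.smul (show (0:ℝ) ≤ 1/2 by norm_num)
    simpa [smul_eq_mul] using this
  have hJU : J * U ≠ 0 := by
    intro h0
    apply hJ
    have h1 : J * U * star U = (0 : Matrix (Fin n) (Fin m) ℂ) * star U := by rw [h0]
    rwa [Matrix.mul_assoc, Matrix.mem_unitaryGroup_iff.mp hUmem, Matrix.mul_one,
      Matrix.zero_mul] at h1
  have conv2 : ConvexOn ℝ Set.univ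
      (fun t : ℝ => Real.log (N₂ (J * mexp ((-t : ℂ) • H)))) := by
    have hcv := convexOn_log_N_diag hN₂ (J * U) hJU (fun j => -lam j)
    have heq : (fun t : ℝ => Real.log (N₂ (J * mexp ((-t : ℂ) • H))))
        = fun t => Real.log (N₂ ((J * U) * diagonal (fun j => (Real.exp (t * (-lam j)) : ℂ)))) := by
      funext t
      have e1 : J * mexp ((-t : ℂ) • H)
          = ((J * U) * diagonal (fun j => (Real.exp (t * (-lam j)) : ℂ))) * star U := by
        rw [mexp_hermitian H hH]
        have hd : (fun i => Complex.exp ((-t : ℂ) * (lam i : ℂ)))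
            = fun j => ((Real.exp (t * (-lam j)) : ℝ) : ℂ) := by
          funext i
          rw [show (-(t:ℂ)) * (lam i : ℂ) = ((t * -lam i : ℝ) : ℂ) by push_cast; ring,
            Complex.ofReal_exp]
        rw [hd, ← Matrix.mul_assoc, ← Matrix.mul_assoc]
      rw [e1]
      have e2 := hN₂.unitary_inv 1 (star U) one_mem_unitary hUstar
        ((J * U) * diagonal (fun j => (Real.exp (t * (-lam j)) : ℂ)))
      rw [Matrix.one_mul] at e2
      rw [e2]
    rw [heq]
    exact hcv
  exact conv1.add conv2
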